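/- For every enumeration operator E, the class {A ∈ 2^ℕ : A′ ≤₁ E(A)} has Lebesgue measure 0 and is meager in Cantor space. -/

import Mathlib

/-- Codes for oracle Turing machines (partial functions recursive in an oracle). -/
inductive OCode : Type
  | zero : OCode
  | succ : OCode
  | left : OCode
  | right : OCode
  | oracle : OCode
  | pair : OCode → OCode → OCode
  | comp : OCode → OCode → OCode
  | prec : OCode → OCode → OCode
  | rfind' : OCode → OCode

namespace OCode

/-- Evaluation of an oracle code with oracle `O : ℕ → ℕ`. -/
def eval (O : ℕ → ℕ) : OCode → ℕ →. ℕ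
  | zero => pure 0
  | succ => fun n => Part.some (n + 1)
  | left => fun n => Part.some n.unpair.1
  | right => fun n => Part.some n.unpair.2
  | oracle => fun n => Part.some (O n)
  | pair cf cg => fun n => Nat.pair <$> eval O cf n <*> eval O cg n
  | comp cf cg => fun n => eval O cg n >>= eval O cf
  | prec cf cg =>
    Nat.unpaired fun a n =>
      n.rec (eval O cf a) fun y IH => do
        let i ← IH
        eval O cg (Nat.pair a (Nat.pair y i))
  | rfind' cf =>
    Nat.unpaired fun a m =>
      (Nat.rfind fun n => (fun m => m = 0) <$> eval O cf (Nat.pair a (n + m))).map (· + m)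

/-- A surjective numbering of oracle codes. -/
def ofNat : ℕ → OCode
  | 0 => zero
  | 1 => succ
  | 2 => left
  | 3 => right
  | 4 => oracle
  | n + 5 =>
    let m := n.div2.div2
    have hm : m < n + 5 := by
      simp only [m, Nat.div2_val]
      have : n / 2 / 2 ≤ n := le_trans (Nat.div_le_self _ _) (Nat.div_le_self _ _)
      omega
    have _m1 : m.unpair.1 < n + 5 := lt_of_le_of_lt m.unpair_left_le hm
    have _m2 : m.unpair.2 < n + 5 := lt_of_le_of_lt m.unpair_right_le hm
    match n.bodd, n.div2.bodd with
    | false, false => pair (ofNat m.unpair.1) (ofNat m.unpair.2)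
    | false, true => comp (ofNat m.unpair.1) (ofNat m.unpair.2)
    | true, false => prec (ofNat m.unpair.1) (ofNat m.unpair.2)
    | true, true => rfind' (ofNat m)
  decreasing_by
    all_goals first
      | exact _m1 | exact _m2 | exact hm
      | (simp_wf; first | exact _m1 | exact _m2 | exact hm)

end OCode

open Classical in
/-- The characteristic function of a set of naturals. -/
noncomputable def chi (A : Set ℕ) : ℕ → ℕ := fun n => if n ∈ A then 1 else 0

/-- The Turing jump `A′` of a set `A ⊆ ℕ`. -/
noncomputable def jump (A : Set ℕ) : Set ℕ :=
  {e | ((OCode.ofNat e).eval (chi A) e).Dom}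

/-- `A` is Turing reducible to `B`. -/
def TuringLE (A B : Set ℕ) : Prop :=
  ∃ c : OCode, ∀ n, c.eval (chi B) n = Part.some (chi A n)

/-- `A` is computably enumerable relative to `B`. -/
def CEIn (A B : Set ℕ) : Prop :=
  ∃ c : OCode, A = {n | (c.eval (chi B) n).Dom}

/-- The projection `π₁(B) = {x : ∃ y, ⟨x,y⟩ ∈ B}`; `B` is an enumeration of `π₁(B)`. -/
def proj1 (C : Set ℕ) : Set ℕ := {x | ∃ y, Nat.pair x y ∈ C}

/-- `E : 2^ℕ → 2^ℕ` is an enumeration operator: some Turing functional `Γ`, given any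
enumeration `C` of any set `A` as oracle, is total with values in `{0,1}` and computes
the characteristic function of an enumeration of `E(A)`. -/
def IsEnumOp (E : Set ℕ → Set ℕ) : Prop :=
  ∃ Γ : OCode, ∀ A C : Set ℕ, proj1 C = A →
    (∀ n, Γ.eval (chi C) n = Part.some 0 ∨ Γ.eval (chi C) n = Part.some 1) ∧
    proj1 {n | Γ.eval (chi C) n = Part.some 1} = E A
open MeasureTheory

/-- The fair-coin (Bernoulli(1/2) product) measure on Cantor space `ℕ → Bool`,
realized as the pushforward of Lebesgue measure on `[0,1)` under the binary-digit map. -/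
noncomputable def cantorMeasure : Measure (ℕ → Bool) :=
  Measure.map (fun x : ℝ => fun n : ℕ => decide (Nat.floor (x * 2 ^ (n + 1)) % 2 = 1))
    (volume.restrict (Set.Ico (0 : ℝ) 1))

/-- The subset of `ℕ` coded by a point of Cantor space. -/
def toSet (x : ℕ → Bool) : Set ℕ := {n | x n = true}

namespace OCode

protected def const : ℕ → OCode
  | 0 => zero
  | n + 1 => comp succ (OCode.const n)

@[simp] theorem eval_const (O : ℕ → ℕ) : ∀ n m, (OCode.const n).eval O m = Part.some n
  | 0, m => rfl
  | n + 1, m => by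
    simp [OCode.const, eval, eval_const O n m]

/-- An explicit encoding of oracle codes. -/
def encodeO : OCode → ℕ
  | zero => 0
  | succ => 1
  | left => 2
  | right => 3
  | oracle => 4
  | pair cf cg => 2 * (2 * Nat.pair (encodeO cf) (encodeO cg)) + 5
  | comp cf cg => 2 * (2 * Nat.pair (encodeO cf) (encodeO cg) + 1) + 5
  | prec cf cg => (2 * (2 * Nat.pair (encodeO cf) (encodeO cg)) + 1) + 5
  | rfind' cf => (2 * (2 * encodeO cf + 1) + 1) + 5

theorem ofNat_encodeO : ∀ c : OCode, ofNat (encodeO c) = c := by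
  intro c
  induction c <;> simp [encodeO, OCode.ofNat, Nat.div2_val, *]

end OCode
namespace OCode

/-- A code whose domain (relative to oracle `O`) is `{n | O n = 0}`. -/
def dom0 : OCode :=
  comp (rfind' (comp oracle left)) (pair (pair left right) zero)

theorem eval_rfind_oracle (O : ℕ → ℕ) (n : ℕ) :
    ((rfind' (comp oracle left)).eval O (Nat.pair n 0)).Dom ↔ O n = 0 := by
  have horacle : ∀ j : ℕ, (comp oracle left).eval O (Nat.pair n j) = Part.some (O n) := by
    intro j; simp [eval, Seq.seq]
  simp only [eval, Nat.unpaired, Nat.unpair_pair, Part.map_Dom]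
  constructor
  · intro h
    obtain ⟨k, hk⟩ := Part.dom_iff_mem.1 h
    have := Nat.rfind_spec hk
    simpa using this
  · intro h
    apply Part.dom_iff_mem.2
    refine ⟨0, Nat.mem_rfind.2 ⟨?_, fun {m} hm => absurd hm (Nat.not_lt_zero m)⟩⟩
    simp [h]

theorem eval_dom0_dom (O : ℕ → ℕ) (n : ℕ) : (dom0.eval O n).Dom ↔ O n = 0 := by
  have hid : (pair (pair left right) zero).eval O n = Part.some (Nat.pair n 0) := by
    simp [eval, Seq.seq, pure, PFun.pure]
  show ((pair (pair left right) zero).eval O n >>= (rfind' (comp oracle left)).eval O).Dom ↔ _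
  rw [hid]
  show ((Part.some (Nat.pair n 0)).bind _).Dom ↔ _
  refine Iff.trans (Iff.of_eq (congrArg Part.Dom (Part.bind_some _ _))) ?_
  exact eval_rfind_oracle O n

/-- Index (in the `ofNat` numbering) of a machine that, on any input, halts
iff `n` is *not* in the oracle set. -/
def negIndex (n : ℕ) : ℕ := encodeO (comp dom0 (OCode.const n))

end OCode

theorem negIndex_mem_jump (A : Set ℕ) (n : ℕ) :
    OCode.negIndex n ∈ jump A ↔ n ∉ A := by
  unfold jump OCode.negIndex
  rw [Set.mem_setOf_eq, OCode.ofNat_encodeO]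
  show (((OCode.const n).eval (chi A) _ >>= OCode.dom0.eval (chi A))).Dom ↔ _
  rw [OCode.eval_const]
  show ((Part.some n).bind _).Dom ↔ _
  refine Iff.trans (Iff.of_eq (congrArg Part.Dom (Part.bind_some _ _))) ?_
  rw [OCode.eval_dom0_dom]
  unfold chi
  by_cases h : n ∈ A <;> simp [h]
namespace OCode

theorem eval_use : ∀ (c : OCode) {O : ℕ → ℕ} {n v : ℕ}, v ∈ c.eval O n →
    ∃ u : ℕ, ∀ O' : ℕ → ℕ, (∀ i, i < u → O' i = O i) → v ∈ c.eval O' n := by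
  intro c
  induction c with
  | zero => exact fun h => ⟨0, fun O' _ => h⟩
  | succ => exact fun h => ⟨0, fun O' _ => h⟩
  | left => exact fun h => ⟨0, fun O' _ => h⟩
  | right => exact fun h => ⟨0, fun O' _ => h⟩
  | oracle =>
    intro O n v h
    refine ⟨n + 1, fun O' hO' => ?_⟩
    simp only [eval, Part.mem_some_iff] at h ⊢
    rw [hO' n (Nat.lt_succ_self n)]; exact h
  | pair cf cg hf hg =>
    intro O n v h
    simp [eval, Seq.seq] at h ⊢
    rcases h with ⟨a, ha, b, hb, rfl⟩
    rcases hf ha with ⟨u₁, h₁⟩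
    rcases hg hb with ⟨u₂, h₂⟩
    exact ⟨max u₁ u₂, fun O' hO' =>
      ⟨a, h₁ O' (fun i hi => hO' i (lt_of_lt_of_le hi (le_max_left _ _))), b,
        h₂ O' (fun i hi => hO' i (lt_of_lt_of_le hi (le_max_right _ _))), rfl⟩⟩
  | comp cf cg hf hg =>
    intro O n v h
    simp only [eval] at h ⊢
    refine (fun h => ?_) (Part.mem_bind_iff.1 h)
    rcases h with ⟨a, ha, hv⟩
    rcases hg ha with ⟨u₁, h₁⟩
    rcases hf hv with ⟨u₂, h₂⟩
    exact ⟨max u₁ u₂, fun O' hO' => Part.mem_bind_iff.2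
      ⟨a, h₁ O' (fun i hi => hO' i (lt_of_lt_of_le hi (le_max_left _ _))),
        h₂ O' (fun i hi => hO' i (lt_of_lt_of_le hi (le_max_right _ _)))⟩⟩
  | prec cf cg hf hg =>
    intro O n v h
    revert h
    simp only [eval, Nat.unpaired]
    generalize n.unpair.1 = a
    induction n.unpair.2 generalizing v with
    | zero =>
      intro h
      rcases hf h with ⟨u, hu⟩
      exact ⟨u, fun O' hO' => hu O' hO'⟩
    | succ m IH =>
      intro h
      rcases Part.mem_bind_iff.1 h with ⟨i, hi, hv⟩
      rcases IH hi with ⟨u₁, h₁⟩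
      rcases hg hv with ⟨u₂, h₂⟩
      exact ⟨max u₁ u₂, fun O' hO' => Part.mem_bind_iff.2
        ⟨i, h₁ O' (fun i hi => hO' i (lt_of_lt_of_le hi (le_max_left _ _))),
          h₂ O' (fun i hi => hO' i (lt_of_lt_of_le hi (le_max_right _ _)))⟩⟩
  | rfind' cf hf =>
    intro O n v h
    simp [eval] at h ⊢
    rcases h with ⟨y, hy, rfl⟩
    have hy' := Nat.mem_rfind.1 hy
    simp at hy'
    rcases hy' with ⟨hy₁, hy₂⟩
    rcases hf hy₁ with ⟨u₀, h₀⟩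
    have key : ∀ j, j < y → ∃ u, ∀ O' : ℕ → ℕ, (∀ i, i < u → O' i = O i) →
        ∃ z ∈ OCode.eval O' cf (Nat.pair (Nat.unpair n).1 (j + (Nat.unpair n).2)), ¬ z = 0 := by
      intro j hj
      rcases hy₂ hj with ⟨z, hz, z0⟩
      rcases hf hz with ⟨u, hu⟩
      exact ⟨u, fun O' hO' => ⟨z, hu O' hO', z0⟩⟩
    choose U hU using key
    refine ⟨max u₀ ((Finset.range y).sup fun j => if hj : j < y then U j hj else 0),
      fun O' hO' => ?_⟩
    refine ⟨y, Nat.mem_rfind.2 ⟨by simpa using h₀ O' (fun i hi => hO' i (lt_of_lt_of_le hi (le_max_left _ _))), ?_⟩, rfl⟩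
    intro j hj
    have hsup : U j hj ≤ (Finset.range y).sup fun j => if hj : j < y then U j hj else 0 := by
      have := Finset.le_sup (f := fun j => if hj : j < y then U j hj else 0)
        (Finset.mem_range.2 hj)
      simpa [hj] using this
    simpa using hU j hj O' (fun i hi => hO' i (lt_of_lt_of_le hi
      (le_trans hsup (le_max_right _ _))))

end OCode
/-! ### Monotonicity and compactness of enumeration operators -/

/-- The canonical enumeration of a set. -/
def canonC (A : Set ℕ) : Set ℕ := {m : ℕ | m.unpair.1 ∈ A}

theorem proj1_canonC (A : Set ℕ) : proj1 (canonC A) = A := by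
  ext x
  constructor
  · rintro ⟨y, hy⟩
    simpa [canonC, Nat.unpair_pair] using hy
  · intro hx
    exact ⟨0, by simpa [canonC, Nat.unpair_pair] using hx⟩

theorem chi_eq_of_agree {C C' : Set ℕ} {u : ℕ} (h : ∀ m, m < u → (m ∈ C' ↔ m ∈ C)) :
    ∀ m, m < u → chi C' m = chi C m := by
  intro m hm
  unfold chi
  by_cases hC : m ∈ C
  · rw [if_pos hC, if_pos ((h m hm).2 hC)]
  · rw [if_neg hC, if_neg (fun hc => hC ((h m hm).1 hc))]

theorem IsEnumOp.monotone {E : Set ℕ → Set ℕ} (hE : IsEnumOp E) {A B : Set ℕ}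
    (hAB : A ⊆ B) : E A ⊆ E B := by
  obtain ⟨Γ, hΓ⟩ := hE
  intro m hm
  rw [← (hΓ A (canonC A) (proj1_canonC A)).2] at hm
  obtain ⟨y, hy⟩ := hm
  have h1 : (1 : ℕ) ∈ Γ.eval (chi (canonC A)) (Nat.pair m y) := by
    rw [Set.mem_setOf_eq] at hy; rw [hy]; exact Part.mem_some 1
  obtain ⟨u, hu⟩ := OCode.eval_use Γ h1
  set C₂ : Set ℕ := canonC A ∪ {p : ℕ | p.unpair.1 ∈ B ∧ u ≤ p.unpair.2} with hC₂
  have hproj : proj1 C₂ = B := by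
    ext x
    constructor
    · rintro ⟨y', hy'⟩
      rcases hy' with h' | h'
      · exact hAB (by simpa [canonC, Nat.unpair_pair] using h')
      · have := h'.1; rwa [Nat.unpair_pair] at this
    · intro hx
      exact ⟨u, Or.inr (by simp [Nat.unpair_pair, hx])⟩
  have hagree : ∀ i, i < u → chi C₂ i = chi (canonC A) i := by
    apply chi_eq_of_agree
    intro i hi
    constructor
    · rintro (h' | h')
      · exact h'
      · exact absurd (lt_of_le_of_lt (le_trans h'.2 (Nat.unpair_right_le i)) hi) (lt_irrefl u)
    · exact Or.inl
  have h2 : (1 : ℕ) ∈ Γ.eval (chi C₂) (Nat.pair m y) := hu (chi C₂) hagree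
  rw [← (hΓ B C₂ hproj).2]
  exact ⟨y, Part.eq_some_iff.2 h2⟩

open Classical in
theorem IsEnumOp.compact {E : Set ℕ → Set ℕ} (hE : IsEnumOp E) {A : Set ℕ} {m : ℕ}
    (h : m ∈ E A) : ∃ s : Finset ℕ, ↑s ⊆ A ∧ m ∈ E ↑s := by
  obtain ⟨Γ, hΓ⟩ := hE
  rw [← (hΓ A (canonC A) (proj1_canonC A)).2] at h
  obtain ⟨y, hy⟩ := h
  have h1 : (1 : ℕ) ∈ Γ.eval (chi (canonC A)) (Nat.pair m y) := by
    rw [Set.mem_setOf_eq] at hy; rw [hy]; exact Part.mem_some 1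
  obtain ⟨u, hu⟩ := OCode.eval_use Γ h1
  refine ⟨(Finset.range u).filter (· ∈ A), ?_, ?_⟩
  · intro a ha
    simp only [Finset.coe_filter, Finset.mem_range, Set.mem_setOf_eq] at ha
    exact ha.2
  · set s : Finset ℕ := (Finset.range u).filter (· ∈ A) with hs
    have hagree : ∀ i, i < u → chi (canonC (↑s : Set ℕ)) i = chi (canonC A) i := by
      apply chi_eq_of_agree
      intro i hi
      simp only [canonC, Set.mem_setOf_eq, hs, Finset.coe_filter, Finset.mem_range]
      constructor
      · rintro ⟨_, h'⟩; exact h'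
      · intro h'; exact ⟨lt_of_le_of_lt (Nat.unpair_left_le i) hi, h'⟩
    have h2 : (1 : ℕ) ∈ Γ.eval (chi (canonC (↑s : Set ℕ))) (Nat.pair m y) := hu _ hagree
    rw [← (hΓ (↑s) (canonC ↑s) (proj1_canonC ↑s)).2]
    exact ⟨y, Part.eq_some_iff.2 h2⟩

theorem IsEnumOp.mem_iff {E : Set ℕ → Set ℕ} (hE : IsEnumOp E) {A : Set ℕ} {m : ℕ} :
    m ∈ E A ↔ ∃ s : Finset ℕ, ↑s ⊆ A ∧ m ∈ E ↑s := by
  constructor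
  · exact hE.compact
  · rintro ⟨s, hsA, hms⟩
    exact hE.monotone hsA hms
/-! ### The classes `M g` -/

/-- The class of `x` such that `g` is a "complementing reduction" of `toSet x` into
`E (toSet x)`. -/
def Mset (E : Set ℕ → Set ℕ) (g : ℕ → ℕ) : Set (ℕ → Bool) :=
  {x | ∀ p : ℕ, (p ∉ toSet x ↔ g p ∈ E (toSet x))}

theorem Mset_antichain {E : Set ℕ → Set ℕ} (hE : IsEnumOp E) {g : ℕ → ℕ}
    {x y : ℕ → Bool} (hx : x ∈ Mset E g) (hy : y ∈ Mset E g)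
    (hxy : toSet x ⊆ toSet y) : toSet x = toSet y := by
  by_contra hne
  obtain ⟨p, hpy, hpx⟩ : ∃ p, p ∈ toSet y ∧ p ∉ toSet x := by
    by_contra hno
    push_neg at hno
    exact hne (Set.Subset.antisymm hxy hno)
  have h1 : g p ∈ E (toSet x) := (hx p).1 hpx
  have h2 : g p ∈ E (toSet y) := hE.monotone hxy h1
  exact ((hy p).2 h2) hpy

theorem measurableSet_memE {E : Set ℕ → Set ℕ} (hE : IsEnumOp E) (m : ℕ) :
    MeasurableSet {x : ℕ → Bool | m ∈ E (toSet x)} := by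
  have : {x : ℕ → Bool | m ∈ E (toSet x)} =
      ⋃ s : {s : Finset ℕ // m ∈ E ↑s}, {x : ℕ → Bool | ∀ a ∈ (s : Finset ℕ), x a = true} := by
    ext x
    simp only [Set.mem_setOf_eq, Set.mem_iUnion]
    constructor
    · intro h
      obtain ⟨s, hsA, hms⟩ := hE.compact h
      exact ⟨⟨s, hms⟩, fun a ha => hsA ha⟩
    · rintro ⟨⟨s, hms⟩, hs⟩
      exact hE.monotone (fun a ha => hs a ha) hms
  rw [this]
  refine MeasurableSet.iUnion fun s => ?_
  have : {x : ℕ → Bool | ∀ a ∈ (s : Finset ℕ), x a = true} =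
      ⋂ a ∈ (s : Finset ℕ), {x : ℕ → Bool | x a = true} := by
    ext x; simp
  rw [this]
  refine MeasurableSet.biInter (Set.to_countable _) (fun a _ => ?_)
  have : MeasurableSet ((fun x : ℕ → Bool => x a) ⁻¹' {true}) :=
    measurable_pi_apply a (MeasurableSet.singleton true)
  simpa [Set.preimage] using this

theorem measurableSet_Mset {E : Set ℕ → Set ℕ} (hE : IsEnumOp E) (g : ℕ → ℕ) :
    MeasurableSet (Mset E g) := by
  have : Mset E g = ⋂ p : ℕ,
      (({x : ℕ → Bool | x p = false} ∩ {x | g p ∈ E (toSet x)}) ∪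
       ({x : ℕ → Bool | x p = true} ∩ {x | g p ∈ E (toSet x)}ᶜ)) := by
    ext x
    simp only [Mset, Set.mem_setOf_eq, Set.mem_iInter, Set.mem_union, Set.mem_inter_iff,
      Set.mem_compl_iff, toSet]
    constructor
    · intro h p
      rcases Bool.eq_false_or_eq_true (x p) with hb | hb
      · exact Or.inr ⟨hb, fun hc => ((h p).2 hc) (by simp [hb])⟩
      · exact Or.inl ⟨hb, (h p).1 (by simp [hb])⟩
    · intro h p
      rcases h p with ⟨hb, hc⟩ | ⟨hb, hc⟩
      · constructor
        · intro _; exact hc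
        · intro _; simp [hb]
      · constructor
        · intro hx; exact absurd hb hx
        · intro hc'; exact absurd hc' hc
  rw [this]
  refine MeasurableSet.iInter fun p => ?_
  refine MeasurableSet.union
    (MeasurableSet.inter ?_ (measurableSet_memE hE (g p)))
    (MeasurableSet.inter ?_ (measurableSet_memE hE (g p)).compl)
  · have : MeasurableSet ((fun x : ℕ → Bool => x p) ⁻¹' {false}) :=
      measurable_pi_apply p (MeasurableSet.singleton false)
    simpa [Set.preimage] using this
  · have : MeasurableSet ((fun x : ℕ → Bool => x p) ⁻¹' {true}) :=
      measurable_pi_apply p (MeasurableSet.singleton true)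
    simpa [Set.preimage] using this
/-! ### Nowhere density of `Mset` -/

theorem isOpen_cylinder (I : Finset ℕ) (b : ℕ → Bool) :
    IsOpen {y : ℕ → Bool | ∀ i ∈ I, y i = b i} := by
  have : {y : ℕ → Bool | ∀ i ∈ I, y i = b i} = Set.pi ↑I (fun i => {b i}) := by
    ext y; simp [Set.mem_pi]
  rw [this]
  exact isOpen_set_pi (I.finite_toSet) (fun i _ => isOpen_discrete _)

theorem Mset_nowhereDense {E : Set ℕ → Set ℕ} (hE : IsEnumOp E) (g : ℕ → ℕ) :
    IsNowhereDense (Mset E g) := by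
  rw [IsNowhereDense]
  rw [Set.eq_empty_iff_forall_notMem]
  intro x hx
  have hcl : closure (Mset E g) ∈ nhds x := mem_interior_iff_mem_nhds.1 hx
  rw [nhds_pi, Filter.mem_pi] at hcl
  obtain ⟨I, hIfin, t, ht, hsub⟩ := hcl
  -- extract a finite cylinder around x contained in the closure
  have hcyl : {y : ℕ → Bool | ∀ i ∈ hIfin.toFinset, y i = x i} ⊆ closure (Mset E g) := by
    intro y hy
    apply hsub
    intro i hi
    have : y i = x i := hy i (hIfin.mem_toFinset.2 hi)
    rw [this]
    exact mem_of_mem_nhds (ht i)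
  set J : Finset ℕ := hIfin.toFinset with hJ
  -- a fresh coordinate
  obtain ⟨p, hp⟩ : ∃ p : ℕ, p ∉ J := by
    by_contra hno
    push_neg at hno
    exact Set.infinite_univ (Set.Finite.subset J.finite_toSet (fun n _ => hno n))
  -- the point of the cylinder with all other coordinates false
  set z₀ : ℕ → Bool := fun i => if i ∈ J then x i else false with hz₀
  have hz₀cyl : z₀ ∈ {y : ℕ → Bool | ∀ i ∈ J, y i = x i} := by
    intro i hi; simp [hz₀, hi]
  -- the cylinder with `p ↦ false` is open and meets `Mset E g`
  have hopen₀ : IsOpen ({y : ℕ → Bool | ∀ i ∈ J, y i = x i} ∩ {y | y p = false}) := by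
    have : ({y : ℕ → Bool | ∀ i ∈ J, y i = x i} ∩ {y | y p = false}) =
        {y : ℕ → Bool | ∀ i ∈ insert p J, y i = z₀ i} := by
      ext y
      simp only [Set.mem_inter_iff, Set.mem_setOf_eq, Finset.mem_insert, hz₀]
      constructor
      · rintro ⟨h1, h2⟩ i hi
        rcases hi with rfl | hi
        · simp [hp, h2]
        · simp [hi, h1 i hi]
      · intro h
        constructor
        · intro i hi
          have := h i (Or.inr hi)
          simpa [hi] using this
        · have := h p (Or.inl rfl)
          simpa [hp] using this
    rw [this]
    exact isOpen_cylinder _ _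
  have hz₀mem : z₀ ∈ {y : ℕ → Bool | ∀ i ∈ J, y i = x i} ∩ {y | y p = false} := by
    refine ⟨hz₀cyl, ?_⟩
    simp [hz₀, hp]
  have : (({y : ℕ → Bool | ∀ i ∈ J, y i = x i} ∩ {y | y p = false}) ∩ Mset E g).Nonempty := by
    have hz₀cl : z₀ ∈ closure (Mset E g) := hcyl hz₀cyl
    rw [mem_closure_iff] at hz₀cl
    exact hz₀cl _ hopen₀ hz₀mem
  obtain ⟨z, ⟨hzcyl, hzp⟩, hzM⟩ := this
  -- z ∈ Mset, z p = false, hence g p ∈ E (toSet z); take a finite subset certificate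
  have hzp' : z p = false := hzp
  have hgp : g p ∈ E (toSet z) := (hzM p).1 (by simp [toSet, hzp'])
  obtain ⟨s, hsz, hgs⟩ := hE.compact hgp
  -- now force p to be 1 together with s
  set w₀ : ℕ → Bool := fun i => if i = p then true else if i ∈ s then true else z₀ i with hw₀
  have hw₀J : ∀ i ∈ J, w₀ i = x i := by
    intro i hi
    by_cases hip : i = p
    · exact absurd (hip ▸ hi) hp
    · by_cases his : i ∈ s
      · have : (i : ℕ) ∈ toSet z := hsz his
        have hz : z i = true := this
        have : x i = true := by rw [← hzcyl i hi]; exact hz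
        simp [hw₀, hip, his, this]
      · simp [hw₀, hip, his, hz₀, hi]
  have hw₀s : ∀ a ∈ s, w₀ a = true := by
    intro a ha
    by_cases hap : a = p
    · simp [hw₀, hap]
    · simp [hw₀, hap, ha]
  have hw₀p : w₀ p = true := by simp [hw₀]
  -- the open set forcing these constraints
  set O' : Set (ℕ → Bool) := {y | ∀ i ∈ (insert p s) ∪ J, y i = w₀ i} with hO'
  have hO'open : IsOpen O' := isOpen_cylinder _ _
  have hO'w₀ : w₀ ∈ O' := fun i _ => rfl
  have hO'sub : O' ⊆ {y : ℕ → Bool | ∀ i ∈ J, y i = x i} := by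
    intro y hy i hi
    rw [hy i (Finset.mem_union_right _ hi)]
    exact hw₀J i hi
  have : (O' ∩ Mset E g).Nonempty := by
    have : w₀ ∈ closure (Mset E g) := hcyl (hO'sub hO'w₀)
    rw [mem_closure_iff] at this
    exact this _ hO'open hO'w₀
  obtain ⟨w, hwO', hwM⟩ := this
  have hws : ↑s ⊆ toSet w := by
    intro a ha
    have : w a = w₀ a := hwO' a (Finset.mem_union_left _ (Finset.mem_insert_of_mem ha))
    show w a = true
    rw [this]; exact hw₀s a ha
  have hwp : p ∈ toSet w := by
    show w p = true
    rw [hwO' p (Finset.mem_union_left _ (Finset.mem_insert_self _ _))]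
    exact hw₀p
  have : g p ∈ E (toSet w) := hE.monotone hws hgs
  exact ((hwM p).2 this) hwp
/-! ### Covering the target class by countably many `Mset`s -/

open Classical in
/-- Decoding a (plain) partial recursive code into a total function. -/
noncomputable def decodeFn (c : Nat.Partrec.Code) : ℕ → ℕ := fun n =>
  if h : (c.eval n).Dom then (c.eval n).get h else 0

theorem decodeFn_eq {f : ℕ → ℕ} (hf : Computable f) :
    ∃ c : Nat.Partrec.Code, decodeFn c = f := by
  have hp : Nat.Partrec (fun n => Part.some (f n)) := Partrec.nat_iff.1 hf
  obtain ⟨c, hc⟩ := Nat.Partrec.Code.exists_code.1 hp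
  refine ⟨c, funext fun n => ?_⟩
  unfold decodeFn
  rw [hc]
  simp

/-- The countable family of candidate reductions. -/
noncomputable def Gfun (c : Nat.Partrec.Code) : ℕ → ℕ := fun p =>
  decodeFn c (OCode.negIndex p)

theorem target_subset_union (E : Set ℕ → Set ℕ) :
    {x : ℕ → Bool | OneOneReducible (· ∈ jump (toSet x)) (· ∈ E (toSet x))} ⊆
      ⋃ c : Nat.Partrec.Code, Mset E (Gfun c) := by
  intro x hx
  obtain ⟨f, fc, -, hf⟩ := hx
  obtain ⟨c, hc⟩ := decodeFn_eq fc
  refine Set.mem_iUnion.2 ⟨c, fun p => ?_⟩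
  have h1 : (p ∉ toSet x) ↔ OCode.negIndex p ∈ jump (toSet x) :=
    (negIndex_mem_jump (toSet x) p).symm
  have h2 : OCode.negIndex p ∈ jump (toSet x) ↔ f (OCode.negIndex p) ∈ E (toSet x) :=
    hf (OCode.negIndex p)
  have h3 : Gfun c p = f (OCode.negIndex p) := by
    unfold Gfun; rw [hc]
  rw [h3]
  exact h1.trans h2
/-! ### The binary digit map -/

/-- The binary digit map underlying `cantorMeasure`. -/
noncomputable def digitMap : ℝ → (ℕ → Bool) := fun x => fun n : ℕ =>
  decide (Nat.floor (x * 2 ^ (n + 1)) % 2 = 1)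

theorem cantorMeasure_eq : cantorMeasure =
    MeasureTheory.Measure.map digitMap (MeasureTheory.volume.restrict (Set.Ico (0 : ℝ) 1)) := rfl

theorem measurable_digitMap : Measurable digitMap := by
  apply measurable_pi_lambda
  intro n
  have h1 : Measurable fun x : ℝ => Nat.floor (x * 2 ^ (n + 1)) :=
    Nat.measurable_floor.comp (measurable_id.mul_const _)
  exact (measurable_from_top (f := fun m : ℕ => decide (m % 2 = 1))).comp h1

theorem digitMap_add_div {k c : ℕ} (hc : c < 2 ^ k) {u : ℝ} (hu : u ∈ Set.Ico (0 : ℝ) 1)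
    (n : ℕ) :
    digitMap (((c : ℝ) + u) / 2 ^ k) n =
      if n < k then c.testBit (k - 1 - n) else digitMap u (n - k) := by
  obtain ⟨hu0, hu1⟩ := hu
  by_cases hn : n < k
  · rw [if_pos hn]
    have hexp : (2 : ℝ) ^ k = 2 ^ (n + 1) * 2 ^ (k - 1 - n) := by
      rw [← pow_add]
      congr 1
      omega
    have harith : ((c : ℝ) + u) / 2 ^ k * 2 ^ (n + 1) =
        ((c : ℝ) + u) / ((2 ^ (k - 1 - n) : ℕ) : ℝ) := by
      rw [hexp]
      push_cast
      field_simp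
    unfold digitMap
    rw [harith, Nat.floor_div_natCast]
    have hfloor : ⌊(c : ℝ) + u⌋₊ = c := by
      rw [add_comm, Nat.floor_add_natCast hu0]
      simp [Nat.floor_eq_zero.2 hu1]
    rw [hfloor, Nat.testBit_eq_decide_div_mod_eq]
  · rw [if_neg hn]
    have hkn : k ≤ n := not_lt.1 hn
    have harith : ((c : ℝ) + u) / 2 ^ k * 2 ^ (n + 1) =
        u * 2 ^ (n - k + 1) + ((c * 2 ^ (n - k + 1) : ℕ) : ℝ) := by
      have hexp : (2 : ℝ) ^ (n + 1) = 2 ^ k * 2 ^ (n - k + 1) := by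
        rw [← pow_add]
        congr 1
        omega
      rw [hexp]
      push_cast
      field_simp
      ring
    unfold digitMap
    rw [harith, Nat.floor_add_natCast (by positivity)]
    have hmod : (⌊u * 2 ^ (n - k + 1)⌋₊ + c * 2 ^ (n - k + 1)) % 2
        = ⌊u * 2 ^ (n - k + 1)⌋₊ % 2 := by
      have : c * 2 ^ (n - k + 1) = 2 * (c * 2 ^ (n - k)) := by
        rw [pow_succ]; ring
      rw [this, Nat.add_mul_mod_self_left]
    rw [hmod]
/-! ### Sperner-type counting -/

/-- The point of Cantor space whose first `k` digits are the (big-endian) bits of `c` and whose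
remaining digits are those of `z`. -/
def ptFun (k : ℕ) (z : ℕ → Bool) (c : ℕ) : ℕ → Bool := fun n =>
  if n < k then c.testBit (k - 1 - n) else z (n - k)

open Classical in
theorem antichain_count {W : Set (ℕ → Bool)}
    (hW : ∀ x y : ℕ → Bool, x ∈ W → y ∈ W → toSet x ⊆ toSet y → toSet x = toSet y)
    (k : ℕ) (z : ℕ → Bool) :
    ((Finset.range (2 ^ k)).filter (fun c => ptFun k z c ∈ W)).card ≤
      Nat.choose k (k / 2) := by
  classical
  set F : Finset ℕ := (Finset.range (2 ^ k)).filter (fun c => ptFun k z c ∈ W) with hF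
  set φ : ℕ → Finset (Fin k) := fun c => Finset.univ.filter (fun i : Fin k => c.testBit i.val)
    with hφ
  have hφmem : ∀ (c : ℕ) (i : Fin k), i ∈ φ c ↔ c.testBit i.val = true := by
    intro c i
    simp [hφ]
  -- φ is injective on F
  have hinj : ∀ c ∈ F, ∀ c' ∈ F, φ c = φ c' → c = c' := by
    intro c hcF c' hc'F hφeq
    have hc : c < 2 ^ k := Finset.mem_range.1 (Finset.mem_filter.1 hcF).1
    have hc' : c' < 2 ^ k := Finset.mem_range.1 (Finset.mem_filter.1 hc'F).1
    apply Nat.eq_of_testBit_eq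
    intro i
    by_cases hik : i < k
    · have h1 := hφmem c ⟨i, hik⟩
      have h2 := hφmem c' ⟨i, hik⟩
      rw [hφeq] at h1
      rw [Bool.eq_iff_iff]
      rw [← h1, ← h2]
    · rw [Nat.testBit_eq_false_of_lt (lt_of_lt_of_le hc (Nat.pow_le_pow_right (by norm_num)
        (not_lt.1 hik))),
        Nat.testBit_eq_false_of_lt (lt_of_lt_of_le hc' (Nat.pow_le_pow_right (by norm_num)
        (not_lt.1 hik)))]
  -- toSet monotone transfer
  have htoSet : ∀ c c' : ℕ, (∀ i : Fin k, c.testBit i.val = true → c'.testBit i.val = true) →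
      toSet (ptFun k z c) ⊆ toSet (ptFun k z c') := by
    intro c c' hmono n hn
    simp only [toSet, Set.mem_setOf_eq, ptFun] at hn ⊢
    by_cases hnk : n < k
    · rw [if_pos hnk] at hn ⊢
      have hlt : k - 1 - n < k := by omega
      exact hmono ⟨k - 1 - n, hlt⟩ hn
    · rw [if_neg hnk] at hn ⊢
      exact hn
  -- the image is an antichain
  have hanti : IsAntichain (· ⊆ ·)
      ((F.image φ : Finset (Finset (Fin k))) : Set (Finset (Fin k))) := by
    intro a ha b hb hab hsub
    simp only [Finset.coe_image, Set.mem_image, Finset.mem_coe] at ha hb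
    obtain ⟨c, hcF, rfl⟩ := ha
    obtain ⟨c', hc'F, rfl⟩ := hb
    have hcW : ptFun k z c ∈ W := (Finset.mem_filter.1 hcF).2
    have hc'W : ptFun k z c' ∈ W := (Finset.mem_filter.1 hc'F).2
    have hmono : ∀ i : Fin k, c.testBit i.val = true → c'.testBit i.val = true := by
      intro i hi
      exact (hφmem c' i).1 (hsub ((hφmem c i).2 hi))
    have heq : toSet (ptFun k z c) = toSet (ptFun k z c') :=
      hW _ _ hcW hc'W (htoSet c c' hmono)
    apply hab
    apply Finset.ext
    intro i
    rw [hφmem c i, hφmem c' i]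
    have hik : (i : ℕ) < k := i.isLt
    have hn : k - 1 - (k - 1 - (i : ℕ)) = (i : ℕ) := by omega
    have hnk : k - 1 - (i : ℕ) < k := by omega
    have hmem := Set.ext_iff.1 heq (k - 1 - (i : ℕ))
    simp only [toSet, Set.mem_setOf_eq, ptFun, if_pos hnk, hn] at hmem
    exact hmem
  have hcard : F.card = (F.image φ).card := (Finset.card_image_of_injOn hinj).symm
  have hs := IsAntichain.sperner hanti
  rw [Fintype.card_fin] at hs
  calc F.card = (F.image φ).card := hcard
    _ ≤ k.choose (k / 2) := hs
/-! ### The measure bound for antichains -/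

open MeasureTheory ENNReal in
theorem cantorMeasure_antichain_le {W : Set (ℕ → Bool)} (hWm : MeasurableSet W)
    (hW : ∀ x y : ℕ → Bool, x ∈ W → y ∈ W → toSet x ⊆ toSet y → toSet x = toSet y)
    (k : ℕ) :
    cantorMeasure W ≤ (Nat.choose k (k / 2) : ℝ≥0∞) / 2 ^ k := by
  classical
  have h2k : (0 : ℝ) < 2 ^ k := by positivity
  -- the pieces
  set I : ℕ → Set ℝ := fun c => Set.Ico ((c : ℝ) / 2 ^ k) (((c : ℝ) + 1) / 2 ^ k) with hI
  set V : ℕ → Set ℝ := fun c => {u : ℝ | digitMap (((c : ℝ) + u) / 2 ^ k) ∈ W} with hV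
  have hImem : ∀ (c : ℕ) (x : ℝ), x ∈ I c ↔ (c : ℝ) ≤ x * 2 ^ k ∧ x * 2 ^ k < (c : ℝ) + 1 := by
    intro c x
    simp only [hI, Set.mem_Ico]
    rw [div_le_iff₀ h2k, lt_div_iff₀ h2k]
  have hVmeas : ∀ c : ℕ, MeasurableSet (V c) := by
    intro c
    have : Measurable fun u : ℝ => ((c : ℝ) + u) / 2 ^ k :=
      (measurable_const.add measurable_id).div_const _
    exact (measurable_digitMap.comp this) hWm
  have hT : cantorMeasure W = volume (digitMap ⁻¹' W ∩ Set.Ico (0 : ℝ) 1) := by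
    rw [cantorMeasure_eq, Measure.map_apply measurable_digitMap hWm,
      Measure.restrict_apply (measurable_digitMap hWm)]
  set T : Set ℝ := digitMap ⁻¹' W ∩ Set.Ico (0 : ℝ) 1 with hTdef
  have hTmeas : MeasurableSet T := (measurable_digitMap hWm).inter measurableSet_Ico
  -- covering
  have hcover : T = ⋃ c ∈ Finset.range (2 ^ k), T ∩ I c := by
    ext x
    simp only [Set.mem_iUnion, Set.mem_inter_iff, exists_prop, Finset.mem_range]
    constructor
    · intro hx
      obtain ⟨-, hx0, hx1⟩ := id hx
      set c : ℕ := ⌊x * 2 ^ k⌋₊ with hc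
      have hxk : 0 ≤ x * 2 ^ k := by positivity
      refine ⟨c, ?_, hx, ?_⟩
      · have : x * 2 ^ k < 2 ^ k := by
          calc x * 2 ^ k < 1 * 2 ^ k := by
                exact mul_lt_mul_of_pos_right hx1 h2k
            _ = 2 ^ k := one_mul _
        have := Nat.floor_lt hxk |>.2 (by
          calc x * 2 ^ k < 2 ^ k := this
            _ = ((2 ^ k : ℕ) : ℝ) := by push_cast; ring)
        exact this
      · rw [hImem]
        exact ⟨Nat.floor_le hxk, Nat.lt_floor_add_one _⟩
    · rintro ⟨c, -, hx, -⟩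
      exact hx
  -- disjointness
  have hdisj : (↑(Finset.range (2 ^ k)) : Set ℕ).PairwiseDisjoint fun c => T ∩ I c := by
    intro c hcmem c' hc'mem hne
    refine Set.disjoint_left.2 fun x hx hx' => hne ?_
    have h1 := (hImem c x).1 hx.2
    have h2 := (hImem c' x).1 hx'.2
    have : (c : ℝ) < (c' : ℝ) + 1 := lt_of_le_of_lt h1.1 h2.2
    have : (c' : ℝ) < (c : ℝ) + 1 := lt_of_le_of_lt h2.1 h1.2
    have hcc : (c : ℕ) < c' + 1 := by exact_mod_cast lt_of_le_of_lt h1.1 h2.2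
    have hc'c : (c' : ℕ) < c + 1 := by exact_mod_cast lt_of_le_of_lt h2.1 h1.2
    omega
  have hsum : volume T = ∑ c ∈ Finset.range (2 ^ k), volume (T ∩ I c) := by
    conv_lhs => rw [hcover]
    exact measure_biUnion_finset hdisj fun c _ => hTmeas.inter measurableSet_Ico
  -- each piece via the affine map
  have hpiece : ∀ c ∈ Finset.range (2 ^ k),
      volume (T ∩ I c) = ENNReal.ofReal (((2 : ℝ) ^ k)⁻¹) * volume (V c ∩ Set.Ico (0 : ℝ) 1) := by
    intro c hc
    rw [Finset.mem_range] at hc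
    have hceq : T ∩ I c = (fun y : ℝ => y * 2 ^ k - c) ⁻¹' (V c ∩ Set.Ico (0 : ℝ) 1) := by
      ext y
      simp only [Set.mem_inter_iff, Set.mem_preimage, Set.mem_Ico, hTdef, Set.mem_setOf_eq,
        Set.mem_preimage, hV]
      constructor
      · rintro ⟨⟨hyW, hy0, hy1⟩, hyI⟩
        have h1 := (hImem c y).1 hyI
        have harg : ((c : ℝ) + (y * 2 ^ k - c)) / 2 ^ k = y := by field_simp; ring
        refine ⟨by rw [harg]; exact hyW, by linarith [h1.1], by linarith [h1.2]⟩
      · rintro ⟨hyW, hu0, hu1⟩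
        have harg : ((c : ℝ) + (y * 2 ^ k - c)) / 2 ^ k = y := by field_simp; ring
        rw [harg] at hyW
        have hyI : y ∈ I c := by
          rw [hImem]
          constructor <;> nlinarith
        have hy0 : (0 : ℝ) ≤ y := by
          have h1 := (hImem c y).1 hyI
          nlinarith [h1.1, (Nat.cast_nonneg c : (0:ℝ) ≤ c)]
        have hy1 : y < 1 := by
          have h1 := (hImem c y).1 hyI
          have hcb : (c : ℝ) + 1 ≤ 2 ^ k := by
            have : (c + 1 : ℕ) ≤ 2 ^ k := hc
            exact_mod_cast this
          nlinarith [h1.2]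
        exact ⟨⟨hyW, hy0, hy1⟩, hyI⟩
    rw [hceq]
    have hcomp : (fun y : ℝ => y * 2 ^ k - c) = (fun z : ℝ => z + (-(c:ℝ))) ∘ (fun y : ℝ => y * 2 ^ k) := by
      funext y; simp [sub_eq_add_neg]
    rw [hcomp, Set.preimage_comp]
    rw [Real.volume_preimage_mul_right (ne_of_gt h2k)]
    rw [measure_preimage_add_right]
    congr 1
    rw [abs_of_pos (by positivity)]
  -- sum of the fiber measures
  have hfiber : ∑ c ∈ Finset.range (2 ^ k), volume (V c ∩ Set.Ico (0 : ℝ) 1) ≤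
      (Nat.choose k (k / 2) : ℝ≥0∞) := by
    have hres : ∀ c : ℕ, volume (V c ∩ Set.Ico (0 : ℝ) 1) =
        (volume.restrict (Set.Ico (0 : ℝ) 1)) (V c) := by
      intro c
      rw [Measure.restrict_apply (hVmeas c)]
    simp only [hres]
    set μ₀ := volume.restrict (Set.Ico (0 : ℝ) 1) with hμ₀
    have hind : ∀ c : ℕ, μ₀ (V c) = ∫⁻ u, (V c).indicator 1 u ∂μ₀ := by
      intro c
      rw [lintegral_indicator_one (hVmeas c)]
    simp only [hind]
    rw [← lintegral_finset_sum _ (fun c _ => (measurable_one.indicator (hVmeas c)))]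
    have hbound : ∀ᵐ u ∂μ₀, (∑ c ∈ Finset.range (2 ^ k), (V c).indicator 1 u) ≤
        ((Nat.choose k (k / 2) : ℝ≥0∞)) := by
      refine (ae_restrict_mem measurableSet_Ico).mono fun u hu => ?_
      have hptw : ∀ c ∈ Finset.range (2 ^ k),
          (u ∈ V c ↔ ptFun k (digitMap u) c ∈ W) := by
        intro c hc
        rw [Finset.mem_range] at hc
        have : digitMap (((c : ℝ) + u) / 2 ^ k) = ptFun k (digitMap u) c := by
          funext n
          rw [digitMap_add_div hc hu n]
          rfl
        rw [hV]
        simp only [Set.mem_setOf_eq, this]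
      calc (∑ c ∈ Finset.range (2 ^ k), (V c).indicator 1 u)
          = ∑ c ∈ Finset.range (2 ^ k), (if ptFun k (digitMap u) c ∈ W then (1:ℝ≥0∞) else 0) := by
            refine Finset.sum_congr rfl fun c hc => ?_
            rw [Set.indicator_apply]
            simp only [Pi.one_apply]
            by_cases h : u ∈ V c
            · rw [if_pos h, if_pos ((hptw c hc).1 h)]
            · rw [if_neg h, if_neg (fun hc' => h ((hptw c hc).2 hc'))]
        _ = ((Finset.range (2 ^ k)).filter (fun c => ptFun k (digitMap u) c ∈ W)).card := by
            rw [Finset.sum_boole]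
        _ ≤ (Nat.choose k (k / 2) : ℝ≥0∞) := by
            exact_mod_cast Nat.cast_le.2 (antichain_count hW k (digitMap u))
    calc ∫⁻ u, (∑ c ∈ Finset.range (2 ^ k), (V c).indicator 1 u) ∂μ₀
        ≤ ∫⁻ _, (Nat.choose k (k / 2) : ℝ≥0∞) ∂μ₀ := lintegral_mono_ae hbound
      _ = (Nat.choose k (k / 2) : ℝ≥0∞) * μ₀ Set.univ := by rw [lintegral_const]
      _ ≤ (Nat.choose k (k / 2) : ℝ≥0∞) := by
          rw [hμ₀, Measure.restrict_apply_univ, Real.volume_Ico]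
          simp
  -- put everything together
  have h2kinv : ENNReal.ofReal (((2 : ℝ) ^ k)⁻¹) = ((2 : ℝ≥0∞) ^ k)⁻¹ := by
    rw [ENNReal.ofReal_inv_of_pos h2k]
    congr 1
    rw [show ((2:ℝ)^k) = ((2^k : ℕ) : ℝ) by push_cast; ring, ENNReal.ofReal_natCast]
    push_cast
    ring
  calc cantorMeasure W = volume T := hT
    _ = ∑ c ∈ Finset.range (2 ^ k), volume (T ∩ I c) := hsum
    _ = ∑ c ∈ Finset.range (2 ^ k),
          ENNReal.ofReal (((2 : ℝ) ^ k)⁻¹) * volume (V c ∩ Set.Ico (0 : ℝ) 1) :=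
        Finset.sum_congr rfl hpiece
    _ = ENNReal.ofReal (((2 : ℝ) ^ k)⁻¹) *
          ∑ c ∈ Finset.range (2 ^ k), volume (V c ∩ Set.Ico (0 : ℝ) 1) := by
        rw [Finset.mul_sum]
    _ ≤ ENNReal.ofReal (((2 : ℝ) ^ k)⁻¹) * (Nat.choose k (k / 2) : ℝ≥0∞) := by
        exact mul_le_mul_right hfiber _
    _ = (Nat.choose k (k / 2) : ℝ≥0∞) / 2 ^ k := by
        rw [h2kinv, div_eq_mul_inv, mul_comm]
/-! ### The central binomial estimate -/

theorem centralBinom_sq_mul_le : ∀ m : ℕ, (Nat.centralBinom m) ^ 2 * (2 * m + 1) ≤ 16 ^ m := by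
  intro m
  induction m with
  | zero => simp [Nat.centralBinom]
  | succ m IH =>
    have key : (m + 1) * Nat.centralBinom (m + 1) = 2 * (2 * m + 1) * Nat.centralBinom m :=
      Nat.succ_mul_centralBinom_succ m
    set a := Nat.centralBinom m with ha
    set b := Nat.centralBinom (m + 1) with hb
    have hcancel : (m + 1) ^ 2 * (b ^ 2 * (2 * (m + 1) + 1)) ≤ (m + 1) ^ 2 * 16 ^ (m + 1) := by
      have h1 : (m + 1) ^ 2 * (b ^ 2 * (2 * (m + 1) + 1)) =
          ((m + 1) * b) ^ 2 * (2 * m + 3) := by ring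
      rw [h1, key]
      have h2 : (2 * (2 * m + 1) * a) ^ 2 * (2 * m + 3) =
          (4 * ((2 * m + 1) * (2 * m + 3))) * ((2 * m + 1) * a ^ 2) := by ring
      rw [h2]
      have h3 : (2 * m + 1) * (2 * m + 3) ≤ 4 * (m + 1) ^ 2 := by nlinarith
      have h4 : (2 * m + 1) * a ^ 2 ≤ 16 ^ m := by
        calc (2 * m + 1) * a ^ 2 = a ^ 2 * (2 * m + 1) := by ring
          _ ≤ 16 ^ m := IH
      calc (4 * ((2 * m + 1) * (2 * m + 3))) * ((2 * m + 1) * a ^ 2)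
          ≤ (4 * (4 * (m + 1) ^ 2)) * (16 ^ m) :=
            Nat.mul_le_mul (Nat.mul_le_mul_left 4 h3) h4
        _ = (m + 1) ^ 2 * 16 ^ (m + 1) := by ring
    exact Nat.le_of_mul_le_mul_left hcancel (by positivity)

open MeasureTheory ENNReal in
theorem cantorMeasure_zero_of_antichain {W : Set (ℕ → Bool)} (hWm : MeasurableSet W)
    (hW : ∀ x y : ℕ → Bool, x ∈ W → y ∈ W → toSet x ⊆ toSet y → toSet x = toSet y) :
    cantorMeasure W = 0 := by
  set μ := cantorMeasure W with hμ
  have hsq : ∀ m : ℕ, μ ^ 2 * ((2 * m + 1 : ℕ) : ℝ≥0∞) ≤ 1 := by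
    intro m
    have hb := cantorMeasure_antichain_le hWm hW (2 * m)
    have hdiv : (2 * m) / 2 = m := by omega
    rw [hdiv] at hb
    have hcb : (Nat.choose (2 * m) m : ℝ≥0∞) = (Nat.centralBinom m : ℝ≥0∞) := by
      rw [Nat.centralBinom]
    rw [hcb] at hb
    have h16 : ((2 : ℝ≥0∞) ^ (2 * m)) ^ 2 = 16 ^ m := by
      rw [← pow_mul]
      have : (16 : ℝ≥0∞) = 2 ^ 4 := by norm_num
      rw [this, ← pow_mul]
      congr 1
      ring
    calc μ ^ 2 * ((2 * m + 1 : ℕ) : ℝ≥0∞)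
        ≤ ((Nat.centralBinom m : ℝ≥0∞) / 2 ^ (2 * m)) ^ 2 * ((2 * m + 1 : ℕ) : ℝ≥0∞) := by
          exact mul_le_mul_left (pow_le_pow_left' hb 2) _
      _ = ((Nat.centralBinom m : ℝ≥0∞) ^ 2 * ((2 * m + 1 : ℕ) : ℝ≥0∞)) * ((16 : ℝ≥0∞) ^ m)⁻¹ := by
          rw [div_eq_mul_inv, mul_pow, ← ENNReal.inv_pow, h16]
          ring
      _ ≤ ((16 : ℝ≥0∞) ^ m) * ((16 : ℝ≥0∞) ^ m)⁻¹ := by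
          refine mul_le_mul_left ?_ _
          have := centralBinom_sq_mul_le m
          calc (Nat.centralBinom m : ℝ≥0∞) ^ 2 * ((2 * m + 1 : ℕ) : ℝ≥0∞)
              = ((Nat.centralBinom m ^ 2 * (2 * m + 1) : ℕ) : ℝ≥0∞) := by push_cast; ring
            _ ≤ ((16 ^ m : ℕ) : ℝ≥0∞) := Nat.cast_le.2 this
            _ = (16 : ℝ≥0∞) ^ m := by push_cast; ring
      _ = 1 := ENNReal.mul_inv_cancel (by positivity) (by
          exact ENNReal.pow_ne_top (by norm_num))
  have hzero : μ ^ 2 = 0 := by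
    by_contra h
    obtain ⟨n, hn⟩ := ENNReal.exists_inv_nat_lt h
    have h1 : μ ^ 2 ≤ ((2 * n + 1 : ℕ) : ℝ≥0∞)⁻¹ :=
      ENNReal.le_inv_iff_mul_le.2 (hsq n)
    have h2 : ((2 * n + 1 : ℕ) : ℝ≥0∞)⁻¹ ≤ ((n : ℕ) : ℝ≥0∞)⁻¹ := by
      apply ENNReal.inv_le_inv'
      exact_mod_cast Nat.le_add_left n (n + 1) |>.trans (by omega)
    exact absurd (h1.trans h2) (not_le.2 hn)
  rw [← hμ] at *
  exact pow_eq_zero_iff (by norm_num) |>.1 hzero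
/-! ### Final assembly -/

theorem isNowhereDense_isMeagre {X : Type*} [TopologicalSpace X] {s : Set X}
    (h : IsNowhereDense s) : IsMeagre s :=
  isMeagre_iff_countable_union_isNowhereDense.2
    ⟨{s}, by simpa using h, Set.countable_singleton s, by simp⟩
/-- For every enumeration operator `E`, the class `{A ∈ 2^ℕ : A′ ≤₁ E(A)}` has Lebesgue
measure `0` and is meager in Cantor space. -/
theorem jump_one_reducible_to_enumOp_null_and_meagre
    (E : Set ℕ → Set ℕ) (hE : IsEnumOp E) :
    cantorMeasure {x : ℕ → Bool | OneOneReducible (· ∈ jump (toSet x)) (· ∈ E (toSet x))} = 0 ∧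
    IsMeagre {x : ℕ → Bool | OneOneReducible (· ∈ jump (toSet x)) (· ∈ E (toSet x))} := by
  have hsub := target_subset_union E
  constructor
  · refine le_antisymm ?_ (zero_le ..)
    calc cantorMeasure {x : ℕ → Bool | OneOneReducible (· ∈ jump (toSet x)) (· ∈ E (toSet x))}
        ≤ cantorMeasure (⋃ c : Nat.Partrec.Code, Mset E (Gfun c)) :=
          MeasureTheory.measure_mono hsub
      _ = 0 := MeasureTheory.measure_iUnion_null fun c =>
          cantorMeasure_zero_of_antichain (measurableSet_Mset hE (Gfun c))
            (fun x y hx hy hxy => Mset_antichain hE hx hy hxy)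
  · refine IsMeagre.mono hsub ?_
    have hnwd : ∀ c : Nat.Partrec.Code, IsNowhereDense (Mset E (Gfun c)) :=
      fun c => Mset_nowhereDense hE (Gfun c)
    refine isMeagre_iff_countable_union_isNowhereDense.2
      ⟨Set.range (fun c : Nat.Partrec.Code => Mset E (Gfun c)), ?_, Set.countable_range _, ?_⟩
    · rintro t ⟨c, rfl⟩
      exact hnwd c
    · rw [Set.sUnion_range]
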